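/- arXiv:1407.0533 — 5 statements merged into one kernel-verified Lean document; each statement's English description precedes it below -/
import Mathlib

section
/- For every integer M ≥ 1 and every real t, the product ∏_{m=1}^{M} cos(t/2^m) equals (1/2^{M-1}) · ∑_{m=1}^{2^{M-1}} cos((2m-1)t/2^M). -/
lemma sum_range_double (n : ℕ) (g : ℕ → ℝ) :
    ∑ j ∈ Finset.range (2 * n), g j = ∑ i ∈ Finset.range n, (g (2 * i) + g (2 * i + 1)) := by
  induction n with
  | zero => simp
  | succ n ih =>
    have : 2 * (n + 1) = (2 * n + 1) + 1 := by ring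
    rw [this, Finset.sum_range_succ, Finset.sum_range_succ, ih, Finset.sum_range_succ]
    ring

theorem incomplete_cosine_identity (M : ℕ) (hM : 1 ≤ M) (t : ℝ) :
    ∏ m ∈ Finset.Icc 1 M, Real.cos (t / 2 ^ m) =
      (1 / 2 ^ (M - 1)) *
        ∑ m ∈ Finset.Icc (1 : ℕ) (2 ^ (M - 1) : ℕ), Real.cos ((2 * (m : ℝ) - 1) * t / 2 ^ M) := by
  induction M, hM using Nat.le_induction with
  | base => norm_num
  | succ M hM IH =>
    obtain ⟨K, rfl⟩ : ∃ K, M = K + 1 := ⟨M - 1, by omega⟩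
    rw [Finset.prod_Icc_succ_top (by omega : 1 ≤ K + 1 + 1), IH]
    simp only [Nat.add_sub_cancel]
    have key : ∑ m ∈ Finset.Icc (1 : ℕ) (2 ^ (K + 1)),
          Real.cos ((2 * (m : ℝ) - 1) * t / 2 ^ (K + 1 + 1)) =
        2 * Real.cos (t / 2 ^ (K + 1 + 1)) *
          ∑ m ∈ Finset.Icc (1 : ℕ) (2 ^ K),
            Real.cos ((2 * (m : ℝ) - 1) * t / 2 ^ (K + 1)) := by
      rw [← Finset.Ico_add_one_right_eq_Icc, ← Finset.Ico_add_one_right_eq_Icc, Finset.sum_Ico_eq_sum_range,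
        Finset.sum_Ico_eq_sum_range]
      have h2 : 2 ^ (K + 1) + 1 - 1 = 2 * 2 ^ K := by rw [pow_succ]; omega
      have h2' : 2 ^ K + 1 - 1 = 2 ^ K := by omega
      rw [h2, h2', sum_range_double, Finset.mul_sum]
      apply Finset.sum_congr rfl
      intro i _
      push_cast
      have hpow : (2 : ℝ) ^ (K + 1 + 1) = 2 ^ (K + 1) * 2 := by rw [pow_succ]
      have h1 : (2 * (1 + 2 * (i : ℝ)) - 1) * t / 2 ^ (K + 1 + 1) =
          (4 * i + 2) * t / 2 ^ (K + 1 + 1) - t / 2 ^ (K + 1 + 1) := by ring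
      have h3 : (2 * (1 + (2 * (i : ℝ) + 1)) - 1) * t / 2 ^ (K + 1 + 1) =
          (4 * i + 2) * t / 2 ^ (K + 1 + 1) + t / 2 ^ (K + 1 + 1) := by ring
      have h4 : (2 * (1 + (i : ℝ)) - 1) * t / 2 ^ (K + 1) =
          (4 * i + 2) * t / 2 ^ (K + 1 + 1) := by
        rw [hpow]; field_simp; ring
      rw [h1, h3, h4, Real.cos_sub, Real.cos_add]
      ring
    rw [key]
    have hpow : (2 : ℝ) ^ (K + 1) = 2 ^ K * 2 := by rw [pow_succ]
    rw [hpow]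
    ring
end

section
/- For every nonzero real t, the infinite product ∏_{m=1}^{∞} cos(t/2^m) converges to sin(t)/t (Viète's formula for the sinc function). -/
open Real Filter

lemma viete_key (t : ℝ) : ∀ M : ℕ,
    (2 ^ M * Real.sin (t / 2 ^ M)) * ∏ m ∈ Finset.Icc 1 M, Real.cos (t / 2 ^ m)
      = Real.sin t := by
  intro M
  induction M with
  | zero => simp
  | succ M ih =>
    rw [Finset.prod_Icc_succ_top (Nat.succ_le_succ (Nat.zero_le M))]
    have h2 : (2:ℝ) ^ (M+1) * Real.sin (t / 2 ^ (M+1)) * Real.cos (t / 2 ^ (M+1))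
        = 2 ^ M * Real.sin (t / 2 ^ M) := by
      have := Real.sin_two_mul (t / 2 ^ (M+1))
      have h : 2 * (t / 2 ^ (M+1)) = t / 2 ^ M := by ring
      rw [h] at this
      rw [this, pow_succ]
      ring
    calc (2:ℝ) ^ (M+1) * Real.sin (t / 2 ^ (M+1)) *
          ((∏ m ∈ Finset.Icc 1 M, Real.cos (t / 2 ^ m)) * Real.cos (t / 2 ^ (M+1)))
        = (2 ^ (M+1) * Real.sin (t / 2 ^ (M+1)) * Real.cos (t / 2 ^ (M+1))) *
          ∏ m ∈ Finset.Icc 1 M, Real.cos (t / 2 ^ m) := by ring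
      _ = Real.sin t := by rw [h2]; exact ih

theorem viete_sinc (t : ℝ) (ht : t ≠ 0) :
    Filter.Tendsto (fun M : ℕ => ∏ m ∈ Finset.Icc 1 M, Real.cos (t / 2 ^ m))
      Filter.atTop (nhds (Real.sin t / t)) := by
  -- t/2^M → 0 within {≠0}
  have h0 : Tendsto (fun M : ℕ => t / 2 ^ M) atTop (nhdsWithin 0 {x | x ≠ 0}) := by
    apply tendsto_nhdsWithin_of_tendsto_nhds_of_eventually_within
    · simpa using tendsto_const_nhds.div_atTop
        (tendsto_pow_atTop_atTop_of_one_lt (by norm_num : (1:ℝ) < 2))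
    · filter_upwards with M
      show t / 2 ^ M ≠ 0
      positivity
  have hslope : Tendsto (fun M : ℕ => Real.sin (t / 2 ^ M) / (t / 2 ^ M)) atTop (nhds 1) := by
    have hd : HasDerivAt Real.sin 1 0 := by simpa using Real.hasDerivAt_sin 0
    have := (hasDerivAt_iff_tendsto_slope.mp hd).comp h0
    refine this.congr fun M => ?_
    simp [slope_def_field, Function.comp]
  have hden : Tendsto (fun M : ℕ => (2:ℝ) ^ M * Real.sin (t / 2 ^ M)) atTop (nhds t) := by
    have := hslope.const_mul t
    rw [mul_one] at this
    refine this.congr fun M => ?_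
    have h2 : (2:ℝ) ^ M ≠ 0 := by positivity
    field_simp
  have hne : ∀ᶠ M in atTop, (2:ℝ) ^ M * Real.sin (t / 2 ^ M) ≠ 0 :=
    hden.eventually_ne ht
  have hmain : Tendsto (fun M : ℕ => Real.sin t / ((2:ℝ) ^ M * Real.sin (t / 2 ^ M)))
      atTop (nhds (Real.sin t / t)) := tendsto_const_nhds.div hden ht
  refine hmain.congr' ?_
  filter_upwards [hne] with M hM
  rw [div_eq_iff hM, mul_comm]
  exact (viete_key t M).symm
end

section
/- The Faddeeva function w(z) = e^{−z²}(1 + (2i/√π)∫_0^z e^{t²} dt) satisfies, for Im(z) > 0, the integral representation w(z) = (1/√π) ∫_0^∞ exp(−t²/4) · exp(izt) dt. -/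
open Complex in
/-- The Faddeeva function, with the contour integral ∫_0^z e^{t²} dt realized along the
segment from 0 to z (path-independent since e^{t²} is entire). -/
noncomputable def faddeeva (z : ℂ) : ℂ :=
  Complex.exp (-z ^ 2) *
    (1 + (2 * I / Real.sqrt Real.pi) * ∫ s in (0 : ℝ)..1, z * Complex.exp ((s * z) ^ 2))

open Complex MeasureTheory Set Filter Topology

noncomputable def FF (c : ℂ) (u s : ℝ) : ℂ :=
  (-2*c) * ((u:ℂ) + (s:ℂ)*c) * Complex.exp (-((u:ℂ) + (s:ℂ)*c)^2)

noncomputable def GG (c : ℂ) (u : ℝ) : ℝ :=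
  (2 * ‖c‖ * Real.exp (c.im^2)) * ((u + ‖c‖) * Real.exp (-u^2))

lemma re_neg_sq (u : ℝ) (w : ℂ) :
    (-(((u:ℂ) + w)^2)).re = -((u + w.re)^2) + w.im^2 := by
  simp [pow_two, Complex.mul_re]
  ring

lemma norm_cexp_shift (u : ℝ) (w : ℂ) :
    ‖Complex.exp (-(((u:ℂ) + w)^2))‖ = Real.exp (-((u + w.re)^2) + w.im^2) := by
  rw [Complex.norm_exp, re_neg_sq]

lemma norm_cexp_shift_le (w : ℂ) (hw : 0 ≤ w.re) {u : ℝ} (hu : 0 ≤ u) :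
    ‖Complex.exp (-(((u:ℂ) + w)^2))‖ ≤ Real.exp (w.im^2) * Real.exp (-u^2) := by
  rw [norm_cexp_shift, ← Real.exp_add]
  apply Real.exp_le_exp.2
  nlinarith [sq_nonneg (u + w.re), sq_nonneg w.re]

lemma bound_FF (c : ℂ) (hc : 0 ≤ c.re) {u s : ℝ} (hu : 0 ≤ u) (hs0 : 0 ≤ s) (hs1 : s ≤ 1) :
    ‖FF c u s‖ ≤ GG c u := by
  have h1 : ‖Complex.exp (-(((u:ℂ) + (s:ℂ)*c)^2))‖
      ≤ Real.exp (c.im^2) * Real.exp (-u^2) := by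
    rw [norm_cexp_shift]
    rw [← Real.exp_add]
    apply Real.exp_le_exp.2
    have hre : ((s:ℂ)*c).re = s * c.re := by simp
    have him : ((s:ℂ)*c).im = s * c.im := by simp
    rw [hre, him]
    nlinarith [sq_nonneg (u + s*c.re), mul_nonneg (mul_nonneg hs0 hc) hu,
      sq_nonneg (s*c.im), sq_nonneg c.im, sq_nonneg s, sq_nonneg (c.im*(1-s)),
      mul_nonneg hs0 hc, sq_nonneg (1-s)]
  have h2 : ‖(-2*c) * ((u:ℂ) + (s:ℂ)*c)‖ ≤ 2 * ‖c‖ * (u + ‖c‖) := by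
    rw [norm_mul]
    have : ‖(u:ℂ) + (s:ℂ)*c‖ ≤ u + ‖c‖ := by
      refine (norm_add_le _ _).trans ?_
      have : ‖(s:ℂ)*c‖ ≤ ‖c‖ := by
        rw [norm_mul]
        simp only [Complex.norm_real, Real.norm_eq_abs, _root_.abs_of_nonneg hs0]
        nlinarith [norm_nonneg c]
      simp only [Complex.norm_real, Real.norm_eq_abs, _root_.abs_of_nonneg hu] at *
      linarith
    have h0 : ‖(-2*c : ℂ)‖ = 2 * ‖c‖ := by
      simp [map_mul]
    rw [h0]
    apply mul_le_mul_of_nonneg_left this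
    positivity
  calc ‖FF c u s‖ = ‖(-2*c) * ((u:ℂ) + (s:ℂ)*c)‖ * ‖Complex.exp (-(((u:ℂ) + (s:ℂ)*c)^2))‖ := by
        rw [FF, norm_mul]
    _ ≤ (2 * ‖c‖ * (u + ‖c‖)) * (Real.exp (c.im^2) * Real.exp (-u^2)) := by
        apply mul_le_mul h2 h1 (norm_nonneg _) (by positivity)
    _ = GG c u := by rw [GG]; ring

lemma integrableOn_GG (c : ℂ) : IntegrableOn (GG c) (Ioi 0) := by
  have h1 : Integrable (fun u : ℝ => u * Real.exp (-u^2)) :=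
    by simpa using integrable_mul_exp_neg_mul_sq (one_pos)
  have h2 : Integrable (fun u : ℝ => Real.exp (-u^2)) :=
    by simpa using integrable_exp_neg_mul_sq (one_pos)
  have : Integrable (GG c) := by
    have := (h1.const_mul (2 * ‖c‖ * Real.exp (c.im^2))).add
      ((h2.const_mul (2 * ‖c‖ * Real.exp (c.im^2) * ‖c‖)))
    apply this.congr
    filter_upwards with u
    simp only [Pi.add_apply, GG]; ring
  exact this.integrableOn

-- derivative in s
lemma hasDerivAt_s (c : ℂ) (u s : ℝ) :
    HasDerivAt (fun s : ℝ => Complex.exp (-((u:ℂ) + (s:ℂ)*c)^2)) (FF c u s) s := by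
  have h0 : HasDerivAt (fun w : ℂ => (u:ℂ) + w * c) c (s:ℂ) := by
    simpa using ((hasDerivAt_id ((s:ℂ))).mul_const c).const_add (u:ℂ)
  have h1 : HasDerivAt (fun w : ℂ => Complex.exp (-((u:ℂ) + w*c)^2))
      ((-(2 * ((u:ℂ) + (s:ℂ)*c)^1 * c)) * Complex.exp (-((u:ℂ) + (s:ℂ)*c)^2)) (s:ℂ) := by
    have h2 := ((h0.fun_pow 2).fun_neg).cexp
    refine h2.congr_deriv ?_
    ring
  have := h1.comp_ofReal
  convert this using 1
  rw [FF]; ring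

-- derivative in u
lemma hasDerivAt_u (w : ℂ) (u : ℝ) :
    HasDerivAt (fun u : ℝ => Complex.exp (-((u:ℂ) + w)^2))
      ((-2) * ((u:ℂ) + w) * Complex.exp (-((u:ℂ) + w)^2)) u := by
  have h0 : HasDerivAt (fun v : ℂ => v + w) 1 (u:ℂ) := (hasDerivAt_id _).add_const w
  have h1 : HasDerivAt (fun v : ℂ => Complex.exp (-(v + w)^2))
      ((-(2 * ((u:ℂ) + w)^1 * 1)) * Complex.exp (-((u:ℂ) + w)^2)) (u:ℂ) := by
    have := ((h0.fun_pow 2).fun_neg).cexp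
    refine this.congr_deriv ?_
    push_cast
    ring
  have := h1.comp_ofReal
  convert this using 1
  ring

lemma continuous_FF (c : ℂ) : Continuous (fun p : ℝ × ℝ => FF c p.1 p.2) := by
  unfold FF; fun_prop

lemma integrableOn_FF (c : ℂ) (hc : 0 ≤ c.re) {s : ℝ} (hs0 : 0 ≤ s) (hs1 : s ≤ 1) :
    IntegrableOn (fun u => FF c u s) (Ioi 0) := by
  apply Integrable.mono' (integrableOn_GG c)
  · exact ((continuous_FF c).comp (by fun_prop : Continuous fun u : ℝ => (u, s))).aestronglyMeasurable
  · filter_upwards [ae_restrict_mem measurableSet_Ioi] with u hu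
    exact bound_FF c hc (le_of_lt hu) hs0 hs1

lemma tendsto_shift (w : ℂ) :
    Tendsto (fun u : ℝ => Complex.exp (-((u:ℂ) + w)^2)) atTop (𝓝 0) := by
  rw [tendsto_zero_iff_norm_tendsto_zero]
  simp only [norm_cexp_shift]
  apply Real.tendsto_exp_atBot.comp
  have h1 : Tendsto (fun u : ℝ => (u + w.re)^2) atTop atTop :=
    (tendsto_pow_atTop two_ne_zero).comp (tendsto_atTop_add_const_right _ _ tendsto_id)
  have := tendsto_neg_atTop_atBot.comp h1
  exact tendsto_atBot_add_const_right _ _ this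

lemma inner_integral (c : ℂ) (hc : 0 ≤ c.re) {s : ℝ} (hs0 : 0 ≤ s) (hs1 : s ≤ 1) :
    ∫ u in Ioi (0:ℝ), FF c u s = -(c * Complex.exp (-((s:ℂ)*c)^2)) := by
  have hderiv : ∀ u ∈ Ici (0:ℝ),
      HasDerivAt (fun u : ℝ => c * Complex.exp (-((u:ℂ) + (s:ℂ)*c)^2)) (FF c u s) u := by
    intro u _
    have := (hasDerivAt_u ((s:ℂ)*c) u).const_mul c
    refine this.congr_deriv ?_
    rw [FF]; ring
  have htend : Tendsto (fun u : ℝ => c * Complex.exp (-((u:ℂ) + (s:ℂ)*c)^2)) atTop (𝓝 0) := by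
    simpa using (tendsto_shift ((s:ℂ)*c)).const_mul c
  have := MeasureTheory.integral_Ioi_of_hasDerivAt_of_tendsto' hderiv
    (integrableOn_FF c hc hs0 hs1) htend
  rw [this]
  simp

lemma ftc_s (c : ℂ) (u : ℝ) :
    Complex.exp (-((u:ℂ) + c)^2) - Complex.exp (-(u:ℂ)^2) = ∫ s in (0:ℝ)..1, FF c u s := by
  have := intervalIntegral.integral_eq_sub_of_hasDerivAt
    (f := fun s : ℝ => Complex.exp (-((u:ℂ) + (s:ℂ)*c)^2)) (f' := fun s => FF c u s)
    (fun s _ => hasDerivAt_s c u s)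
    (((continuous_FF c).comp (by fun_prop : Continuous fun s : ℝ => (u, s))).intervalIntegrable 0 1)
  rw [this]
  norm_num

lemma integrableOn_shift (w : ℂ) (hw : 0 ≤ w.re) :
    IntegrableOn (fun u : ℝ => Complex.exp (-((u:ℂ) + w)^2)) (Ioi 0) := by
  apply Integrable.mono' (((integrable_exp_neg_mul_sq one_pos).const_mul
    (Real.exp (w.im^2))).integrableOn)
  · apply Continuous.aestronglyMeasurable; fun_prop
  · filter_upwards [ae_restrict_mem measurableSet_Ioi] with u hu
    have := norm_cexp_shift_le w hw (le_of_lt hu)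
    simpa [neg_mul] using this

lemma fubini_FF (c : ℂ) (hc : 0 ≤ c.re) :
    ∫ u in Ioi (0:ℝ), ∫ s in (0:ℝ)..1, FF c u s
      = ∫ s in (0:ℝ)..1, ∫ u in Ioi (0:ℝ), FF c u s := by
  have h01 : (0:ℝ) ≤ 1 := zero_le_one
  simp only [intervalIntegral.integral_of_le h01]
  set ν := volume.restrict (Ioc (0:ℝ) 1) with hν
  set μ := volume.restrict (Ioi (0:ℝ)) with hμ
  haveI : IsFiniteMeasure ν := ⟨by
    rw [hν, Measure.restrict_apply_univ, Real.volume_Ioc]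
    simp⟩
  have hmeas : AEStronglyMeasurable (fun p : ℝ × ℝ => FF c p.1 p.2) (μ.prod ν) :=
    (continuous_FF c).aestronglyMeasurable
  have hint : Integrable (fun p : ℝ × ℝ => FF c p.1 p.2) (μ.prod ν) := by
    rw [MeasureTheory.integrable_prod_iff hmeas]
    constructor
    · filter_upwards with u
      exact ((continuous_FF c).comp (by fun_prop : Continuous fun s : ℝ => (u, s))).integrableOn_Ioc
    · apply Integrable.mono' (integrableOn_GG c)
      · exact hmeas.norm.integral_prod_right'
      · filter_upwards [ae_restrict_mem measurableSet_Ioi] with u hu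
        have hb : ∀ᵐ s ∂ν, ‖‖FF c u s‖‖ ≤ GG c u := by
          filter_upwards [ae_restrict_mem measurableSet_Ioc] with s hs
          rw [norm_norm]
          exact bound_FF c hc (le_of_lt hu) (le_of_lt hs.1) hs.2
        have := norm_integral_le_of_norm_le_const hb
        have hν1 : ν.real univ = 1 := by
          rw [measureReal_def, hν, Measure.restrict_apply_univ, Real.volume_Ioc]; simp
        rw [hν1, mul_one] at this
        exact this
  exact MeasureTheory.integral_integral_swap hint

lemma halfline_shift (c : ℂ) (hc : 0 < c.re) :
    ∫ u in Ioi (0:ℝ), Complex.exp (-((u:ℂ) + c)^2)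
      = (Real.sqrt Real.pi : ℂ)/2 - ∫ s in (0:ℝ)..1, c * Complex.exp (-((s:ℂ)*c)^2) := by
  have hgauss : ∫ u in Ioi (0:ℝ), Complex.exp (-(u:ℂ)^2) = (Real.sqrt Real.pi : ℂ)/2 := by
    have h := integral_gaussian_complex_Ioi (b := 1) (by norm_num)
    simp only [neg_mul, one_mul, div_one] at h
    rw [h]
    congr 1
    rw [show ((1:ℂ)/2) = (((1/2 : ℝ)):ℂ) by norm_num,
      ← Complex.ofReal_cpow Real.pi_pos.le, ← Real.sqrt_eq_rpow]
  have hgint : IntegrableOn (fun u : ℝ => Complex.exp (-(u:ℂ)^2)) (Ioi 0) := by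
    have := integrableOn_shift 0 (by simp)
    simpa using this
  have hshift := integrableOn_shift c hc.le
  have key : (∫ u in Ioi (0:ℝ), Complex.exp (-((u:ℂ) + c)^2))
      - (∫ u in Ioi (0:ℝ), Complex.exp (-(u:ℂ)^2))
      = - ∫ s in (0:ℝ)..1, c * Complex.exp (-((s:ℂ)*c)^2) := by
    rw [← integral_sub hshift hgint]
    calc ∫ u in Ioi (0:ℝ), (Complex.exp (-((u:ℂ) + c)^2) - Complex.exp (-(u:ℂ)^2))
        = ∫ u in Ioi (0:ℝ), ∫ s in (0:ℝ)..1, FF c u s :=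
          integral_congr_ae (Eventually.of_forall fun u => ftc_s c u)
      _ = ∫ s in (0:ℝ)..1, ∫ u in Ioi (0:ℝ), FF c u s := fubini_FF c hc.le
      _ = ∫ s in (0:ℝ)..1, -(c * Complex.exp (-((s:ℂ)*c)^2)) := by
          apply intervalIntegral.integral_congr
          intro s hs
          rw [uIcc_of_le zero_le_one] at hs
          exact inner_integral c hc.le hs.1 hs.2
      _ = - ∫ s in (0:ℝ)..1, c * Complex.exp (-((s:ℂ)*c)^2) :=
          intervalIntegral.integral_neg
  rw [hgauss] at key
  linear_combination key

open Complex in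
theorem faddeeva_integral_repr (z : ℂ) (hz : 0 < z.im) :
    faddeeva z =
      (1 / Real.sqrt Real.pi : ℂ) *
        ∫ t in Set.Ioi (0 : ℝ), Complex.exp (-(t : ℂ) ^ 2 / 4) * Complex.exp (I * z * t) := by
  set c : ℂ := -(I * z) with hc_def
  have hc : 0 < c.re := by simp [hc_def, hz]
  -- rewrite the integrand
  have hpt : ∀ t : ℝ, Complex.exp (-(t : ℂ) ^ 2 / 4) * Complex.exp (I * z * t)
      = Complex.exp (-z^2) * Complex.exp (-(((2⁻¹ * t : ℝ) : ℂ) + c)^2) := by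
    intro t
    rw [← Complex.exp_add, ← Complex.exp_add]
    congr 1
    push_cast
    linear_combination z^2 * Complex.I_sq
  have hsub : ∫ t in Set.Ioi (0:ℝ), Complex.exp (-(((2⁻¹ * t : ℝ) : ℂ) + c)^2)
      = (2:ℝ) • ∫ u in Set.Ioi (0:ℝ), Complex.exp (-((u:ℂ) + c)^2) := by
    have h := MeasureTheory.integral_comp_mul_left_Ioi
      (g := fun u : ℝ => Complex.exp (-((u:ℂ) + c)^2)) 0 (b := (2:ℝ)⁻¹) (by norm_num)
    simpa using h
  have hB : ∫ s in (0:ℝ)..1, c * Complex.exp (-((s:ℂ)*c)^2)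
      = (-I) * ∫ s in (0:ℝ)..1, z * Complex.exp (((s:ℂ) * z)^2) := by
    rw [← intervalIntegral.integral_const_mul]
    apply intervalIntegral.integral_congr
    intro s _
    show c * Complex.exp (-((s:ℂ)*c)^2) = -I * (z * Complex.exp (((s:ℂ) * z)^2))
    have hexp : -((s:ℂ)*c)^2 = ((s:ℂ)*z)^2 := by
      rw [hc_def]
      linear_combination (-(s:ℂ)^2*z^2) * Complex.I_sq
    rw [hexp, hc_def]
    ring
  have hA := halfline_shift c hc
  have hπ : (Real.sqrt Real.pi : ℂ) ≠ 0 :=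
    Complex.ofReal_ne_zero.mpr (ne_of_gt (Real.sqrt_pos.mpr Real.pi_pos))
  calc faddeeva z = _ := rfl
    _ = (1 / Real.sqrt Real.pi : ℂ) *
        ∫ t in Set.Ioi (0 : ℝ), Complex.exp (-(t : ℂ) ^ 2 / 4) * Complex.exp (I * z * t) := by
      rw [show (∫ t in Set.Ioi (0:ℝ), Complex.exp (-(t : ℂ) ^ 2 / 4) * Complex.exp (I * z * t))
          = ∫ t in Set.Ioi (0:ℝ), Complex.exp (-z^2) * Complex.exp (-(((2⁻¹ * t : ℝ) : ℂ) + c)^2)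
          from MeasureTheory.integral_congr_ae (Filter.Eventually.of_forall fun t => hpt t)]
      rw [integral_const_mul, hsub, hA, hB, faddeeva]
      rw [Complex.real_smul]
      push_cast
      field_simp
      ring
end

section
/- The plasma dispersion function Z(z) = (1/√π) ∫_{−∞}^{∞} e^{−t²}/(t − z) dt, for Im(z) > 0, equals i√π · w(z), where w is the Faddeeva function. -/
noncomputable section
namespace PlasmaAux
open Complex MeasureTheory Real Filter Metric Set Topology

def Fz (z : ℂ) : ℂ := ∫ t : ℝ, Complex.exp (-(t : ℂ) ^ 2) / ((t : ℂ) - z)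

def Hz (z : ℂ) : ℂ := ∫ s in (0:ℝ)..1, z * Complex.exp ((s * z) ^ 2)


lemma cexp_neg_sq (t : ℝ) : Complex.exp (-(t : ℂ) ^ 2) = ((Real.exp (-t ^ 2) : ℝ) : ℂ) := by
  rw [Complex.ofReal_exp]; push_cast; ring_nf

lemma norm_cexp_neg_sq (t : ℝ) : ‖Complex.exp (-(t : ℂ) ^ 2)‖ = Real.exp (-t ^ 2) := by
  rw [cexp_neg_sq, Complex.norm_real, Real.norm_eq_abs, abs_of_pos (Real.exp_pos _)]

lemma le_norm_sub {x : ℂ} (hx : 0 < x.im) (t : ℝ) : x.im ≤ ‖(t : ℂ) - x‖ := by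
  have h := Complex.abs_im_le_norm ((t : ℂ) - x)
  rw [Complex.sub_im, Complex.ofReal_im, zero_sub, abs_neg, abs_of_pos hx] at h
  exact h

lemma sub_ne {x : ℂ} (hx : 0 < x.im) (t : ℝ) : (t : ℂ) - x ≠ 0 := by
  intro h
  have := congrArg Complex.im h
  simp at this
  exact hx.ne' this

lemma meas_one (x : ℂ) : AEStronglyMeasurable (fun t : ℝ => Complex.exp (-(t : ℂ) ^ 2) / ((t : ℂ) - x)) volume := by
  have m1 : Measurable fun t : ℝ => Complex.exp (-(t : ℂ) ^ 2) :=
    (Complex.continuous_exp.comp (by continuity)).measurable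
  have m2 : Measurable fun t : ℝ => (t : ℂ) - x := by
    have : Continuous fun t : ℝ => (t : ℂ) - x := by continuity
    exact this.measurable
  exact (m1.div m2).aestronglyMeasurable

lemma meas_sq (x : ℂ) : AEStronglyMeasurable (fun t : ℝ => Complex.exp (-(t : ℂ) ^ 2) / ((t : ℂ) - x) ^ 2) volume := by
  have m1 : Measurable fun t : ℝ => Complex.exp (-(t : ℂ) ^ 2) :=
    (Complex.continuous_exp.comp (by continuity)).measurable
  have m2 : Measurable fun t : ℝ => ((t : ℂ) - x) ^ 2 := by
    have : Continuous fun t : ℝ => ((t : ℂ) - x) ^ 2 := by continuity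
    exact this.measurable
  exact (m1.div m2).aestronglyMeasurable

lemma integrable_one {x : ℂ} (hx : 0 < x.im) :
    Integrable fun t : ℝ => Complex.exp (-(t : ℂ) ^ 2) / ((t : ℂ) - x) := by
  refine ((integrable_exp_neg_mul_sq one_pos).div_const x.im).mono' (meas_one x) ?_
  filter_upwards with t
  rw [norm_div, norm_cexp_neg_sq, neg_one_mul]
  gcongr
  all_goals first | exact hx | exact hx.le | exact le_norm_sub hx t | positivity

lemma integrable_sq {x : ℂ} (hx : 0 < x.im) :
    Integrable fun t : ℝ => Complex.exp (-(t : ℂ) ^ 2) / ((t : ℂ) - x) ^ 2 := by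
  refine ((integrable_exp_neg_mul_sq one_pos).div_const (x.im ^ 2)).mono' (meas_sq x) ?_
  filter_upwards with t
  rw [norm_div, norm_cexp_neg_sq, neg_one_mul, norm_pow]
  gcongr
  all_goals first | exact hx | exact hx.le | exact le_norm_sub hx t | positivity

lemma integrable_mul {x : ℂ} (hx : 0 < x.im) :
    Integrable fun t : ℝ => (t : ℂ) * Complex.exp (-(t : ℂ) ^ 2) / ((t : ℂ) - x) := by
  have hb : Integrable fun t : ℝ => |t * Real.exp (-1 * t ^ 2)| / x.im :=
    ((integrable_mul_exp_neg_mul_sq one_pos).abs).div_const x.im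
  refine hb.mono' ?_ ?_
  · have m1 : Measurable fun t : ℝ => (t : ℂ) * Complex.exp (-(t : ℂ) ^ 2) := by
      have : Continuous fun t : ℝ => (t : ℂ) := Complex.continuous_ofReal
      exact (this.mul (Complex.continuous_exp.comp (by continuity))).measurable
    have m2 : Measurable fun t : ℝ => (t : ℂ) - x := by
      have : Continuous fun t : ℝ => (t : ℂ) - x := by continuity
      exact this.measurable
    exact (m1.div m2).aestronglyMeasurable
  · filter_upwards with t
    rw [norm_div, norm_mul, norm_cexp_neg_sq, Complex.norm_real, Real.norm_eq_abs]
    rw [abs_mul, abs_of_pos (Real.exp_pos _), neg_one_mul]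
    gcongr
    all_goals first | exact hx | exact hx.le | exact le_norm_sub hx t | positivity

lemma integral_cexp : (∫ t : ℝ, Complex.exp (-(t : ℂ) ^ 2)) = ((Real.sqrt π : ℝ) : ℂ) := by
  have : ∀ t : ℝ, Complex.exp (-(t : ℂ) ^ 2) = ((Real.exp (-1 * t ^ 2) : ℝ) : ℂ) := by
    intro t; rw [Complex.ofReal_exp]; push_cast; ring_nf
  simp_rw [this, ← Complex.coe_algebraMap, RCLike.algebraMap_eq_ofReal, integral_ofReal,
    integral_gaussian]
  norm_num

lemma hasDerivAt_cexp_neg_sq (w : ℂ) :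
    HasDerivAt (fun w : ℂ => Complex.exp (-w ^ 2)) (-2 * w * Complex.exp (-w ^ 2)) w := by
  have h := ((hasDerivAt_pow 2 w).neg).cexp
  refine h.congr_deriv ?_
  simp only [Pi.neg_apply]
  ring

lemma hasDerivAt_phi (z : ℂ) (w : ℂ) (hw : w - z ≠ 0) :
    HasDerivAt (fun w => Complex.exp (-w ^ 2) / (w - z))
      (-2 * w * Complex.exp (-w ^ 2) / (w - z) - Complex.exp (-w ^ 2) / (w - z) ^ 2) w := by
  have h2 : HasDerivAt (fun w : ℂ => w - z) 1 w := (hasDerivAt_id w).sub_const z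
  have h := (hasDerivAt_cexp_neg_sq w).div h2 hw
  refine h.congr_deriv ?_
  field_simp

lemma hasDerivAt_inner {z : ℂ} (hz : 0 < z.im) (t : ℝ) {x : ℂ} (hx : x ∈ ball z (z.im / 2)) :
    HasDerivAt (fun x : ℂ => Complex.exp (-(t : ℂ) ^ 2) / ((t : ℂ) - x))
      (Complex.exp (-(t : ℂ) ^ 2) / ((t : ℂ) - x) ^ 2) x := by
  have him : z.im / 2 < x.im := by
    have h1 : |x.im - z.im| ≤ ‖x - z‖ := by
      have := Complex.abs_im_le_norm (x - z)
      simpa using this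
    have h2 : ‖x - z‖ < z.im / 2 := mem_ball_iff_norm.mp hx
    have := (abs_lt.mp (h1.trans_lt h2)).1
    linarith
  have hne : (t : ℂ) - x ≠ 0 := sub_ne (by linarith [hz]) t
  have h1 : HasDerivAt (fun x : ℂ => (t : ℂ) - x) (-1) x := by
    simpa using ((hasDerivAt_id x).const_sub (t : ℂ))
  have h2 := h1.inv hne
  have h3 := h2.const_mul (Complex.exp (-(t : ℂ) ^ 2))
  have heq : (fun x : ℂ => Complex.exp (-(t : ℂ) ^ 2) * ((t : ℂ) - x)⁻¹)
      = fun x : ℂ => Complex.exp (-(t : ℂ) ^ 2) / ((t : ℂ) - x) := by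
    funext x; rw [div_eq_mul_inv]
  simp only [Pi.inv_apply] at h3
  rw [heq] at h3
  refine h3.congr_deriv ?_
  field_simp

lemma im_pos_of_ball {z : ℂ} (hz : 0 < z.im) {x : ℂ} (hx : x ∈ ball z (z.im / 2)) :
    z.im / 2 < x.im := by
  have h1 : |x.im - z.im| ≤ ‖x - z‖ := by
    have := Complex.abs_im_le_norm (x - z)
    simpa using this
  have h2 : ‖x - z‖ < z.im / 2 := mem_ball_iff_norm.mp hx
  have := (abs_lt.mp (h1.trans_lt h2)).1
  linarith

lemma hasDerivAt_Fz {z : ℂ} (hz : 0 < z.im) :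
    HasDerivAt Fz (∫ t : ℝ, Complex.exp (-(t : ℂ) ^ 2) / ((t : ℂ) - z) ^ 2) z := by
  have hε : 0 < z.im / 2 := by linarith
  have h := hasDerivAt_integral_of_dominated_loc_of_deriv_le (μ := volume)
    (F := fun x (t : ℝ) => Complex.exp (-(t : ℂ) ^ 2) / ((t : ℂ) - x))
    (F' := fun x (t : ℝ) => Complex.exp (-(t : ℂ) ^ 2) / ((t : ℂ) - x) ^ 2)
    (bound := fun t : ℝ => Real.exp (-1 * t ^ 2) / (z.im / 2) ^ 2)
    (ball_mem_nhds z hε) (Eventually.of_forall fun x => meas_one x) (integrable_one hz) (meas_sq z)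
    ?_ (((integrable_exp_neg_mul_sq one_pos)).div_const _) ?_
  · exact h.2
  · filter_upwards with t
    intro x hx
    have him := im_pos_of_ball hz hx
    rw [norm_div, norm_cexp_neg_sq, neg_one_mul, norm_pow]
    gcongr
    all_goals first | exact hε | exact (le_norm_sub (hε.trans him) t).trans' (by linarith) | positivity
  · filter_upwards with t
    intro x hx
    exact hasDerivAt_inner hz t hx

lemma tendsto_exp_neg_sq_atTop : Tendsto (fun t : ℝ => Real.exp (-t ^ 2)) atTop (𝓝 0) := by
  have hp : Tendsto (fun t : ℝ => t ^ 2) atTop atTop := tendsto_pow_atTop (by norm_num)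
  have h1 : Tendsto (fun t : ℝ => -t ^ 2) atTop atBot := tendsto_neg_atTop_atBot.comp hp
  exact Real.tendsto_exp_atBot.comp h1

lemma tendsto_exp_neg_sq_atBot : Tendsto (fun t : ℝ => Real.exp (-t ^ 2)) atBot (𝓝 0) := by
  have h0 : Tendsto (fun t : ℝ => t ^ 2) atBot atTop := by
    have hp : Tendsto (fun t : ℝ => t ^ 2) atTop atTop := tendsto_pow_atTop (by norm_num)
    have h := hp.comp tendsto_neg_atBot_atTop
    have heq : ((fun u : ℝ => u ^ 2) ∘ fun t : ℝ => -t) = fun t : ℝ => t ^ 2 := by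
      funext t; simp [Function.comp, neg_sq]
    rwa [heq] at h
  exact Real.tendsto_exp_atBot.comp (tendsto_neg_atTop_atBot.comp h0)

lemma tendsto_g_atTop {z : ℂ} (hz : 0 < z.im) :
    Tendsto (fun t : ℝ => Complex.exp (-(t : ℂ) ^ 2) / ((t : ℂ) - z)) atTop (𝓝 0) := by
  apply squeeze_zero_norm (a := fun t : ℝ => Real.exp (-t ^ 2) / z.im)
  · intro t
    rw [norm_div, norm_cexp_neg_sq]
    gcongr
    all_goals first | exact hz | exact le_norm_sub hz t | positivity
  · simpa using tendsto_exp_neg_sq_atTop.div_const z.im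

lemma tendsto_g_atBot {z : ℂ} (hz : 0 < z.im) :
    Tendsto (fun t : ℝ => Complex.exp (-(t : ℂ) ^ 2) / ((t : ℂ) - z)) atBot (𝓝 0) := by
  apply squeeze_zero_norm (a := fun t : ℝ => Real.exp (-t ^ 2) / z.im)
  · intro t
    rw [norm_div, norm_cexp_neg_sq]
    gcongr
    all_goals first | exact hz | exact le_norm_sub hz t | positivity
  · simpa using tendsto_exp_neg_sq_atBot.div_const z.im

lemma integrable_gprime {z : ℂ} (hz : 0 < z.im) :
    Integrable fun t : ℝ => -2 * (t : ℂ) * Complex.exp (-(t : ℂ) ^ 2) / ((t : ℂ) - z)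
      - Complex.exp (-(t : ℂ) ^ 2) / ((t : ℂ) - z) ^ 2 := by
  have h := ((integrable_mul hz).const_mul (-2)).sub (integrable_sq hz)
  apply h.congr
  filter_upwards with t
  simp only [Pi.sub_apply]
  ring

lemma integral_gprime_eq_zero {z : ℂ} (hz : 0 < z.im) :
    (∫ t : ℝ, (-2 * (t : ℂ) * Complex.exp (-(t : ℂ) ^ 2) / ((t : ℂ) - z)
      - Complex.exp (-(t : ℂ) ^ 2) / ((t : ℂ) - z) ^ 2)) = 0 := by
  set g : ℝ → ℂ := fun t => Complex.exp (-(t : ℂ) ^ 2) / ((t : ℂ) - z) with hg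
  set g' : ℝ → ℂ := fun t => -2 * (t : ℂ) * Complex.exp (-(t : ℂ) ^ 2) / ((t : ℂ) - z)
      - Complex.exp (-(t : ℂ) ^ 2) / ((t : ℂ) - z) ^ 2 with hg'
  have hderiv : ∀ t : ℝ, HasDerivAt g (g' t) t := by
    intro t
    exact (hasDerivAt_phi z t (sub_ne hz t)).comp_ofReal
  have hint : Integrable g' := integrable_gprime hz
  have h1 : (∫ t in Iic (0:ℝ), g' t) = g 0 - 0 :=
    integral_Iic_of_hasDerivAt_of_tendsto' (fun x _ => hderiv x) hint.integrableOn
      (tendsto_g_atBot hz)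
  have h2 : (∫ t in Ioi (0:ℝ), g' t) = 0 - g 0 :=
    integral_Ioi_of_hasDerivAt_of_tendsto' (fun x _ => hderiv x) hint.integrableOn
      (tendsto_g_atTop hz)
  have h3 : (∫ t : ℝ, g' t) = (∫ t in Iic (0:ℝ), g' t) + ∫ t in Ioi (0:ℝ), g' t :=
    (intervalIntegral.integral_Iic_add_Ioi hint.integrableOn hint.integrableOn).symm
  rw [h3, h1, h2]
  ring

lemma integral_sq_eq {z : ℂ} (hz : 0 < z.im) :
    (∫ t : ℝ, Complex.exp (-(t : ℂ) ^ 2) / ((t : ℂ) - z) ^ 2)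
      = -2 * ((Real.sqrt π : ℝ) : ℂ) - 2 * z * Fz z := by
  have h0 := integral_gprime_eq_zero hz
  have hsub : (∫ t : ℝ, (-2 * (t : ℂ) * Complex.exp (-(t : ℂ) ^ 2) / ((t : ℂ) - z)
      - Complex.exp (-(t : ℂ) ^ 2) / ((t : ℂ) - z) ^ 2))
      = (∫ t : ℝ, -2 * ((t : ℂ) * Complex.exp (-(t : ℂ) ^ 2) / ((t : ℂ) - z)))
        - ∫ t : ℝ, Complex.exp (-(t : ℂ) ^ 2) / ((t : ℂ) - z) ^ 2 := by
    rw [← integral_sub ((integrable_mul hz).const_mul (-2)) (integrable_sq hz)]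
    congr 1
    funext t
    ring
  rw [hsub] at h0
  have hmul : (∫ t : ℝ, -2 * ((t : ℂ) * Complex.exp (-(t : ℂ) ^ 2) / ((t : ℂ) - z)))
      = -2 * ∫ t : ℝ, (t : ℂ) * Complex.exp (-(t : ℂ) ^ 2) / ((t : ℂ) - z) :=
    integral_const_mul _ _
  have hsplit : (∫ t : ℝ, (t : ℂ) * Complex.exp (-(t : ℂ) ^ 2) / ((t : ℂ) - z))
      = ((Real.sqrt π : ℝ) : ℂ) + z * Fz z := by
    have hptwise : ∀ t : ℝ, (t : ℂ) * Complex.exp (-(t : ℂ) ^ 2) / ((t : ℂ) - z)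
        = Complex.exp (-(t : ℂ) ^ 2) + z * (Complex.exp (-(t : ℂ) ^ 2) / ((t : ℂ) - z)) := by
      intro t
      have hne := sub_ne hz t
      field_simp
      ring
    rw [integral_congr_ae (Eventually.of_forall hptwise)]
    have hic : Integrable fun t : ℝ => Complex.exp (-(t : ℂ) ^ 2) := by
      refine (integrable_exp_neg_mul_sq one_pos).mono'
        ((Complex.continuous_exp.comp (by continuity)).aestronglyMeasurable) ?_
      filter_upwards with t
      rw [norm_cexp_neg_sq, neg_one_mul]
    rw [integral_add hic ((integrable_one hz).const_mul z), integral_cexp,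
      integral_const_mul]
    rfl
  rw [hmul, hsplit] at h0
  have : (∫ t : ℝ, Complex.exp (-(t : ℂ) ^ 2) / ((t : ℂ) - z) ^ 2)
      = -2 * (((Real.sqrt π : ℝ) : ℂ) + z * Fz z) := by linear_combination -h0
  rw [this]; ring

lemma hasDerivAt_psi (z w : ℂ) :
    HasDerivAt (fun w : ℂ => w * Complex.exp ((w * z) ^ 2))
      ((1 + 2 * w ^ 2 * z ^ 2) * Complex.exp ((w * z) ^ 2)) w := by
  have hc : HasDerivAt (fun w : ℂ => (w * z) ^ 2) (2 * (w * z) * z) w := by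
    have h1 : HasDerivAt (fun w : ℂ => w * z) z w := by
      simpa using (hasDerivAt_id w).mul_const z
    have := (h1.pow 2)
    refine this.congr_deriv ?_
    ring
  have he := hc.cexp
  have h := (hasDerivAt_id w).mul he
  refine h.congr_deriv ?_
  simp only [id_eq]
  ring

lemma hasDerivAt_inner_H (s : ℝ) (x : ℂ) :
    HasDerivAt (fun x : ℂ => x * Complex.exp (((s : ℂ) * x) ^ 2))
      ((1 + 2 * (s : ℂ) ^ 2 * x ^ 2) * Complex.exp (((s : ℂ) * x) ^ 2)) x := by
  have heq : (fun x : ℂ => x * Complex.exp (((s : ℂ) * x) ^ 2))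
      = fun x : ℂ => x * Complex.exp ((x * (s : ℂ)) ^ 2) := by
    funext y; rw [mul_comm ((s : ℂ)) y]
  rw [heq]
  have h := hasDerivAt_psi (s : ℂ) x
  have harg : (x * (s : ℂ)) ^ 2 = ((s : ℂ) * x) ^ 2 := by ring
  rw [harg] at h
  convert h using 1
  ring

lemma hasDerivAt_Hz (z : ℂ) : HasDerivAt Hz (Complex.exp (z ^ 2)) z := by
  set R : ℝ := ‖z‖ + 1 with hR
  have hR0 : 0 < R := by positivity
  have key := intervalIntegral.hasDerivAt_integral_of_dominated_loc_of_deriv_le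
    (F := fun (x : ℂ) (s : ℝ) => x * Complex.exp (((s : ℂ) * x) ^ 2))
    (F' := fun (x : ℂ) (s : ℝ) => (1 + 2 * (s : ℂ) ^ 2 * x ^ 2) * Complex.exp (((s : ℂ) * x) ^ 2))
    (bound := fun _ : ℝ => (1 + 2 * R ^ 2) * Real.exp (R ^ 2))
    (a := (0:ℝ)) (b := (1:ℝ)) (μ := volume) (x₀ := z) (ball_mem_nhds z one_pos) ?_ ?_ ?_ ?_ ?_ ?_
  · have h2 := key.2
    have heq : (∫ s in (0:ℝ)..1, (1 + 2 * (s : ℂ) ^ 2 * z ^ 2) * Complex.exp (((s : ℂ) * z) ^ 2))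
        = Complex.exp (z ^ 2) := by
      have hftc := intervalIntegral.integral_eq_sub_of_hasDerivAt
        (f := fun s : ℝ => (s : ℂ) * Complex.exp (((s : ℂ) * z) ^ 2))
        (f' := fun s : ℝ => (1 + 2 * (s : ℂ) ^ 2 * z ^ 2) * Complex.exp (((s : ℂ) * z) ^ 2))
        (a := (0:ℝ)) (b := (1:ℝ)) ?_ ?_
      · rw [hftc]; push_cast; simp
      · intro s _
        have := (hasDerivAt_psi z (s : ℂ)).comp_ofReal
        simpa using this
      · apply Continuous.intervalIntegrable
        continuity
    rw [heq] at h2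
    exact h2
  · filter_upwards with x
    apply Continuous.aestronglyMeasurable
    continuity
  · apply Continuous.intervalIntegrable
    continuity
  · apply Continuous.aestronglyMeasurable
    continuity
  · filter_upwards with s
    intro hs x hx
    have hxR : ‖x‖ ≤ R := by
      have := mem_ball_iff_norm.mp hx
      have h2 : ‖x‖ - ‖z‖ ≤ ‖x - z‖ := norm_sub_norm_le x z
      rw [hR]; linarith
    rw [Set.uIoc_of_le (by norm_num : (0:ℝ) ≤ 1)] at hs
    have hs1 : |s| ≤ 1 := by
      rw [abs_le]
      constructor <;> [linarith [hs.1]; linarith [hs.2]]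
    rw [norm_mul]
    have hb1 : ‖(1 : ℂ) + 2 * (s : ℂ) ^ 2 * x ^ 2‖ ≤ 1 + 2 * R ^ 2 := by
      refine (norm_add_le _ _).trans ?_
      simp only [norm_one, norm_mul, norm_pow, Complex.norm_two,
        Complex.norm_real, Real.norm_eq_abs]
      have e1 : |s| ^ 2 ≤ 1 ^ 2 := pow_le_pow_left₀ (abs_nonneg s) hs1 2
      have e2 : ‖x‖ ^ 2 ≤ R ^ 2 := by
        exact pow_le_pow_left₀ (norm_nonneg x) hxR 2
      nlinarith [abs_nonneg s, norm_nonneg x,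
        sq_nonneg (|s| * ‖x‖)]
    have hb2 : ‖Complex.exp (((s : ℂ) * x) ^ 2)‖ ≤ Real.exp (R ^ 2) := by
      rw [Complex.norm_exp]
      apply Real.exp_le_exp.mpr
      refine (Complex.re_le_norm _).trans ?_
      rw [norm_pow, norm_mul, Complex.norm_real, Real.norm_eq_abs]
      have habs : ‖x‖ ≤ R := hxR
      have h1 : |s| * ‖x‖ ≤ 1 * R :=
        mul_le_mul hs1 habs (norm_nonneg x) (by norm_num)
      calc (|s| * ‖x‖) ^ 2 ≤ (1 * R) ^ 2 :=
            pow_le_pow_left₀ (by positivity) h1 2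
        _ = R ^ 2 := by ring
    exact mul_le_mul hb1 hb2 (norm_nonneg _) (by positivity)
  · apply Continuous.intervalIntegrable
    continuity
  · filter_upwards with s
    intro _ x _
    exact hasDerivAt_inner_H s x

lemma norm_Fz_le {x : ℂ} (hx : 0 < x.im) : ‖Fz x‖ ≤ Real.sqrt π / x.im := by
  have h := norm_integral_le_of_norm_le (μ := volume)
    (f := fun t : ℝ => Complex.exp (-(t : ℂ) ^ 2) / ((t : ℂ) - x))
    (g := fun t : ℝ => Real.exp (-1 * t ^ 2) / x.im)
    ((integrable_exp_neg_mul_sq one_pos).div_const x.im) ?_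
  · refine h.trans ?_
    rw [integral_div, integral_gaussian]
    norm_num
  · filter_upwards with t
    rw [norm_div, norm_cexp_neg_sq, neg_one_mul]
    gcongr
    all_goals first | exact hx | exact le_norm_sub hx t | positivity

lemma Hz_I_mul {y : ℝ} (hy : 0 < y) :
    Hz (Complex.I * y) = Complex.I * ((∫ u in (0:ℝ)..y, Real.exp (-u ^ 2) : ℝ) : ℂ) := by
  unfold Hz
  have hptwise : ∀ s : ℝ, s ∈ Set.uIcc (0:ℝ) 1 →
      (Complex.I * y) * Complex.exp (((s : ℂ) * (Complex.I * y)) ^ 2)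
        = Complex.I * ((y * Real.exp (-(y * s) ^ 2) : ℝ) : ℂ) := by
    intro s _
    have harg : (((s : ℂ) * (Complex.I * y)) ^ 2) = ((-(y * s) ^ 2 : ℝ) : ℂ) := by
      push_cast
      rw [mul_pow, mul_pow, Complex.I_sq]
      ring
    rw [harg, ← Complex.ofReal_exp]
    push_cast
    ring
  rw [intervalIntegral.integral_congr hptwise, intervalIntegral.integral_const_mul,
    intervalIntegral.integral_ofReal]
  congr 1
  norm_cast
  have hsub : (∫ s in (0:ℝ)..1, y * Real.exp (-(y * s) ^ 2))
      = y * ∫ s in (0:ℝ)..1, Real.exp (-(y * s) ^ 2) := intervalIntegral.integral_const_mul _ _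
  rw [hsub]
  have hcomp : (∫ s in (0:ℝ)..1, Real.exp (-(y * s) ^ 2))
      = y⁻¹ • ∫ u in (y * 0)..(y * 1), Real.exp (-u ^ 2) :=
    intervalIntegral.integral_comp_mul_left (fun u => Real.exp (-u ^ 2)) hy.ne'
  rw [hcomp]
  simp only [mul_zero, mul_one, smul_eq_mul]
  field_simp

lemma tendsto_interval_gaussian :
    Tendsto (fun y : ℝ => ∫ u in (0:ℝ)..y, Real.exp (-u ^ 2)) atTop (𝓝 (Real.sqrt π / 2)) := by
  have hi : IntegrableOn (fun u : ℝ => Real.exp (-u ^ 2)) (Ioi 0) := by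
    have := (integrable_exp_neg_mul_sq one_pos).integrableOn (s := Ioi (0:ℝ))
    apply this.congr_fun ?_ measurableSet_Ioi
    intro u _
    simp [neg_one_mul]
  have h := MeasureTheory.intervalIntegral_tendsto_integral_Ioi 0 hi tendsto_id
  have hval : (∫ u in Ioi (0:ℝ), Real.exp (-u ^ 2)) = Real.sqrt π / 2 := by
    have h1 := integral_gaussian_Ioi 1
    simp only [neg_one_mul] at h1
    rw [h1]
    norm_num
  rwa [hval] at h

def G (w : ℂ) : ℂ := Complex.exp (w ^ 2) * Fz w + 2 * ((Real.sqrt π : ℝ) : ℂ) * Hz w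

lemma hasDerivAt_G {w : ℂ} (hw : 0 < w.im) : HasDerivAt G 0 w := by
  have h1 : HasDerivAt (fun w : ℂ => Complex.exp (w ^ 2)) (2 * w * Complex.exp (w ^ 2)) w := by
    have := (hasDerivAt_pow 2 w).cexp
    refine this.congr_deriv ?_
    ring
  have h2 : HasDerivAt Fz (-2 * ((Real.sqrt π : ℝ) : ℂ) - 2 * w * Fz w) w := by
    have := hasDerivAt_Fz hw
    rwa [integral_sq_eq hw] at this
  have h3 := (hasDerivAt_Hz w).const_mul (2 * ((Real.sqrt π : ℝ) : ℂ))
  have h := (h1.mul h2).add h3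
  refine h.congr_deriv ?_
  ring

lemma G_const {z w : ℂ} (hz : 0 < z.im) (hw : 0 < w.im) : G z = G w := by
  have hopen : IsOpen {x : ℂ | 0 < x.im} := isOpen_lt continuous_const Complex.continuous_im
  have hconv : Convex ℝ {x : ℂ | 0 < x.im} := convex_halfSpace_im_gt 0
  apply hconv.is_const_of_fderivWithin_eq_zero (𝕜 := ℂ)
  · intro x hx
    exact ((hasDerivAt_G hx).differentiableAt).differentiableWithinAt
  · intro x hx
    rw [fderivWithin_of_isOpen hopen hx]
    have := (hasDerivAt_G hx).hasFDerivAt.fderiv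
    rw [this]
    ext v
    simp
  · exact hz
  · exact hw

lemma tendsto_G : Tendsto (fun y : ℝ => G (Complex.I * y)) atTop
    (𝓝 (Complex.I * (π : ℂ))) := by
  have hT1 : Tendsto (fun y : ℝ => Complex.exp ((Complex.I * y) ^ 2) * Fz (Complex.I * y))
      atTop (𝓝 0) := by
    apply squeeze_zero_norm' (a := fun y : ℝ => Real.exp (-y ^ 2) * Real.sqrt π)
    · filter_upwards [eventually_ge_atTop (1:ℝ)] with y hy
      have hy0 : (0:ℝ) < y := by linarith
      have him : (Complex.I * y).im = y := by simp
      have hF := norm_Fz_le (x := Complex.I * y) (by rw [him]; exact hy0)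
      rw [him] at hF
      have hexp : ‖Complex.exp ((Complex.I * y) ^ 2)‖ = Real.exp (-y ^ 2) := by
        rw [Complex.norm_exp]
        congr 1
        have : ((Complex.I * y) ^ 2) = ((-y ^ 2 : ℝ) : ℂ) := by
          rw [mul_pow, Complex.I_sq]; push_cast; ring
        rw [this, Complex.ofReal_re]
      rw [norm_mul, hexp]
      have h2 : ‖Fz (Complex.I * y)‖ ≤ Real.sqrt π := by
        refine hF.trans ?_
        rw [div_le_iff₀ hy0]
        nlinarith [Real.sqrt_nonneg π]
      exact mul_le_mul_of_nonneg_left h2 (Real.exp_pos _).le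
    · simpa using tendsto_exp_neg_sq_atTop.mul_const (Real.sqrt π)
  have hT2 : Tendsto (fun y : ℝ => 2 * ((Real.sqrt π : ℝ) : ℂ) * Hz (Complex.I * y))
      atTop (𝓝 (Complex.I * (π : ℂ))) := by
    have hr : Tendsto (fun y : ℝ => (((∫ u in (0:ℝ)..y, Real.exp (-u ^ 2)) : ℝ) : ℂ))
        atTop (𝓝 ((Real.sqrt π / 2 : ℝ) : ℂ)) :=
      (Complex.continuous_ofReal.tendsto _).comp tendsto_interval_gaussian
    have h2 : Tendsto (fun y : ℝ => 2 * ((Real.sqrt π : ℝ) : ℂ) * (Complex.I *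
        (((∫ u in (0:ℝ)..y, Real.exp (-u ^ 2)) : ℝ) : ℂ)))
        atTop (𝓝 (2 * ((Real.sqrt π : ℝ) : ℂ) * (Complex.I * ((Real.sqrt π / 2 : ℝ) : ℂ)))) :=
      (hr.const_mul _).const_mul _
    have hval : 2 * ((Real.sqrt π : ℝ) : ℂ) * (Complex.I * ((Real.sqrt π / 2 : ℝ) : ℂ))
        = Complex.I * (π : ℂ) := by
      have hsq : ((Real.sqrt π : ℝ) : ℂ) * ((Real.sqrt π : ℝ) : ℂ) = (π : ℂ) := by
        norm_cast
        exact Real.mul_self_sqrt Real.pi_pos.le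
      push_cast
      linear_combination Complex.I * hsq
    rw [hval] at h2
    apply h2.congr'
    filter_upwards [eventually_gt_atTop (0:ℝ)] with y hy
    rw [Hz_I_mul hy]
  have := hT1.add hT2
  rw [zero_add] at this
  apply this.congr
  intro y
  rfl

lemma key {z : ℂ} (hz : 0 < z.im) :
    Complex.exp (z ^ 2) * Fz z + 2 * ((Real.sqrt π : ℝ) : ℂ) * Hz z
      = Complex.I * (π : ℂ) := by
  have hGz : ∀ᶠ y : ℝ in atTop, G (Complex.I * y) = G z := by
    filter_upwards [eventually_gt_atTop (0:ℝ)] with y hy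
    exact G_const (by simpa using hy) hz
  have h := tendsto_G.congr' hGz
  have h2 : Tendsto (fun _ : ℝ => G z) atTop (𝓝 (G z)) := tendsto_const_nhds
  have := tendsto_nhds_unique h2 h
  exact this

end PlasmaAux
end

open Complex in
theorem plasma_dispersion_eq (z : ℂ) (hz : 0 < z.im) :
    (1 / Real.sqrt Real.pi : ℂ) * ∫ t : ℝ, Complex.exp (-(t : ℂ) ^ 2) / ((t : ℂ) - z) =
      I * Real.sqrt Real.pi * faddeeva z := by
  have hkey := PlasmaAux.key hz
  have hFz : (∫ t : ℝ, Complex.exp (-(t : ℂ) ^ 2) / ((t : ℂ) - z)) = PlasmaAux.Fz z := rfl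
  have hHz : (∫ s in (0 : ℝ)..1, z * Complex.exp ((s * z) ^ 2)) = PlasmaAux.Hz z := rfl
  rw [faddeeva, hFz, hHz]
  have hexp : Complex.exp (-z ^ 2) * Complex.exp (z ^ 2) = 1 := by
    rw [← Complex.exp_add]
    simp
  have hs : ((Real.sqrt Real.pi : ℝ) : ℂ) ≠ 0 := by
    norm_cast
    positivity
  have hsq : ((Real.sqrt Real.pi : ℝ) : ℂ) * ((Real.sqrt Real.pi : ℝ) : ℂ) = (Real.pi : ℂ) := by
    norm_cast
    exact Real.mul_self_sqrt Real.pi_pos.le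
  have hF : PlasmaAux.Fz z = Complex.exp (-z ^ 2) *
      (Complex.I * (Real.pi : ℂ) - 2 * ((Real.sqrt Real.pi : ℝ) : ℂ) * PlasmaAux.Hz z) := by
    linear_combination Complex.exp (-z ^ 2) * hkey - PlasmaAux.Fz z * hexp
  rw [hF]
  field_simp
  linear_combination (-Complex.I) * hsq
    - (2 * ((Real.sqrt Real.pi : ℝ) : ℂ) * PlasmaAux.Hz z) * Complex.I_sq
end

section
/- For real T_P with 0 < T_P < 2π and every real t, the series ∑_{p=−∞}^{∞} sinc(t + p·T_P) converges to π/T_P. -/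
open MeasureTheory Filter intervalIntegral Topology
open Real hiding sinc
open scoped FourierTransform

noncomputable def sinc (t : ℝ) : ℝ := if t = 0 then 1 else Real.sin t / t

lemma sinc_eq_integral (x : ℝ) : sinc x = ∫ u in (0:ℝ)..1, Real.cos (x * u) := by
  rcases eq_or_ne x 0 with h | h
  · simp [sinc, h]
  · rw [sinc, if_neg h, intervalIntegral.integral_comp_mul_left (fun y => Real.cos y) h]
    simp [integral_cos, div_eq_inv_mul]

noncomputable def EK (T : ℝ) (N : ℕ) (u : ℝ) : ℝ :=
  1 + 2 * ∑ k ∈ Finset.range N, Real.cos (((k:ℝ)+1) * (T * u))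

lemma continuous_EK (T : ℝ) (N : ℕ) : Continuous (EK T N) := by
  unfold EK
  exact continuous_const.add (continuous_const.mul (continuous_finset_sum _ fun k _ =>
    Real.continuous_cos.comp (continuous_const.mul (continuous_const.mul continuous_id))))

lemma EK_mul_sin (T : ℝ) (N : ℕ) (u : ℝ) :
    EK T N u * Real.sin (T*u/2) = Real.sin (((N:ℝ)+1/2) * (T*u)) := by
  induction N with
  | zero => simp [EK]; norm_num; ring_nf
  | succ n ih =>
    rw [EK, Finset.sum_range_succ]
    rw [EK] at ih
    have e1 : ((n:ℝ)+1+1/2)*(T*u) = ((n:ℝ)+1)*(T*u) + T*u/2 := by ring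
    have e2 : ((n:ℝ)+1/2)*(T*u) = ((n:ℝ)+1)*(T*u) - T*u/2 := by ring
    push_cast
    rw [e1, Real.sin_add]
    rw [e2, Real.sin_sub] at ih
    linear_combination ih

lemma Icc_step (n : ℕ) : Finset.Icc (-((n:ℤ)+1)) ((n:ℤ)+1) =
    insert (-((n:ℤ)+1)) (insert ((n:ℤ)+1) (Finset.Icc (-(n:ℤ)) (n:ℤ))) := by
  ext p; simp only [Finset.mem_Icc, Finset.mem_insert]; omega

lemma sum_cos_eq (t T u : ℝ) (N : ℕ) :
    ∑ p ∈ Finset.Icc (-(N:ℤ)) (N:ℤ), Real.cos ((t + (p:ℝ) * T) * u)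
      = Real.cos (t * u) * EK T N u := by
  induction N with
  | zero => simp [EK]
  | succ n ih =>
    have hc : ((n+1:ℕ):ℤ) = (n:ℤ)+1 := by push_cast; ring
    rw [hc, Icc_step, Finset.sum_insert (by simp only [Finset.mem_insert, Finset.mem_Icc]; omega),
      Finset.sum_insert (by simp only [Finset.mem_Icc]; omega), ih]
    simp only [EK, Finset.sum_range_succ]
    have e1 : (t + ((-((n:ℤ)+1) : ℤ):ℝ) * T) * u = t*u - ((n:ℝ)+1)*(T*u) := by push_cast; ring
    have e2 : (t + (((n:ℤ)+1 : ℤ):ℝ) * T) * u = t*u + ((n:ℝ)+1)*(T*u) := by push_cast; ring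
    rw [e1, e2, Real.cos_add, Real.cos_sub]
    ring

lemma partial_sum_eq (t T : ℝ) (N : ℕ) :
    ∑ p ∈ Finset.Icc (-(N:ℤ)) (N:ℤ), sinc (t + (p:ℝ) * T)
      = ∫ u in (0:ℝ)..1, Real.cos (t*u) * EK T N u := by
  simp_rw [sinc_eq_integral, ← sum_cos_eq t T _ N]
  rw [← intervalIntegral.integral_finset_sum]
  intro p _
  exact (Real.continuous_cos.comp (continuous_const.mul continuous_id)).intervalIntegrable _ _

lemma EK_integral (T : ℝ) (hT : 0 < T) (N : ℕ) :
    ∫ u in (0:ℝ)..(π/T), EK T N u = π / T := by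
  have hT0 : T ≠ 0 := ne_of_gt hT
  have hk : ∀ k : ℕ, ∫ u in (0:ℝ)..(π/T), Real.cos (((k:ℝ)+1) * (T * u)) = 0 := by
    intro k
    have hc : ((k:ℝ)+1) * T ≠ 0 := by positivity
    simp_rw [show ∀ u:ℝ, ((k:ℝ)+1)*(T*u) = (((k:ℝ)+1)*T)*u from fun u => by ring]
    rw [intervalIntegral.integral_comp_mul_left (fun y => Real.cos y) hc]
    have : ((k:ℝ)+1)*T*(π/T) = ((k+1:ℕ):ℝ)*π := by push_cast; field_simp
    simp only [integral_cos, mul_zero, Real.sin_zero, sub_zero, this, Real.sin_nat_mul_pi,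
      smul_eq_mul, mul_zero]
  unfold EK
  rw [intervalIntegral.integral_add (intervalIntegrable_const)
      ((by fun_prop : Continuous fun u : ℝ => 2 * ∑ k ∈ Finset.range N, Real.cos (((k:ℝ)+1) * (T * u))).intervalIntegrable _ _),
    intervalIntegral.integral_const_mul]
  have hs := intervalIntegral.integral_finset_sum (μ := volume) (a := (0:ℝ)) (b := π/T)
      (s := Finset.range N) (f := fun (k : ℕ) (u : ℝ) => Real.cos (((k:ℝ)+1)*(T*u)))
      (fun k _ => ((by fun_prop : Continuous fun u : ℝ => Real.cos (((k:ℝ)+1) * (T * u))).intervalIntegrable _ _))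
  rw [hs]
  simp [hk]

lemma RL (f : ℝ → ℝ) (hf : Integrable f) (c : ℝ) (hc : 0 < c) :
    Tendsto (fun N : ℕ => ∫ v, f v * Real.sin (((N:ℝ)+1/2)*(c*v))) atTop (𝓝 0) := by
  set F : ℝ → ℂ := fun v => (f v : ℂ) with hF
  have hFi : Integrable F := hf.ofReal
  set w : ℕ → ℝ := fun N => ((N:ℝ)+1/2)*c/(2*π) with hw
  have hw1 : Tendsto w atTop atTop := by
    have h1 : Tendsto (fun N : ℕ => (N:ℝ)) atTop atTop := tendsto_natCast_atTop_atTop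
    have h2 : Tendsto (fun N : ℕ => (N:ℝ) + 1/2) atTop atTop :=
      tendsto_atTop_add_const_right atTop (1/2 : ℝ) h1
    have h3 : Tendsto (fun N : ℕ => ((N:ℝ) + 1/2) * c) atTop atTop := h2.atTop_mul_const hc
    exact h3.atTop_div_const (by positivity)
  have h2 : Tendsto (fun N => 𝓕 F (w N)) atTop (𝓝 0) :=
    (Real.zero_at_infty_fourier F).comp
      (hw1.mono_right (by rw [cocompact_eq_atBot_atTop]; exact le_sup_right))
  have h3 : Tendsto (fun N => -(𝓕 F (w N)).im) atTop (𝓝 0) := by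
    have := (Complex.continuous_im.tendsto 0).comp h2
    simpa using this.neg
  refine h3.congr fun N => ?_
  have hint : Integrable (fun v : ℝ => 𝐞 (-(v * w N)) • F v) :=
    (Real.fourierIntegral_convergent_iff' (ContinuousLinearMap.mul ℝ ℝ) (w N)).2 hFi
  have him := Complex.imCLM.integral_comp_comm hint
  simp only [Complex.imCLM_apply] at him
  have hE : 𝓕 F (w N) = ∫ v, 𝐞 (-(v * w N)) • F v := Real.fourier_real_eq _ _
  rw [hE, ← him]
  rw [← MeasureTheory.integral_neg]
  congr 1
  funext v
  have hx : 2*π*(-(v*w N)) = -(((N:ℝ)+1/2)*(c*v)) := by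
    rw [hw]; field_simp
  simp only [Circle.smul_def, Real.fourierChar_apply, hx, hF, smul_eq_mul,
    Complex.mul_im, Complex.ofReal_re, Complex.ofReal_im, Complex.exp_ofReal_mul_I_im,
    Complex.exp_ofReal_mul_I_re, mul_zero, add_zero, zero_mul, Real.sin_neg]
  ring

lemma RL_interval_le (a b : ℝ) (hab : a ≤ b) (g : ℝ → ℝ)
    (hg : IntegrableOn g (Set.Ioc a b)) (c : ℝ) (hc : 0 < c) :
    Tendsto (fun N : ℕ => ∫ u in a..b, g u * Real.sin (((N:ℝ)+1/2)*(c*u))) atTop (𝓝 0) := by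
  have hind : Integrable (Set.indicator (Set.Ioc a b) g) :=
    (integrable_indicator_iff measurableSet_Ioc).2 hg
  refine (RL _ hind c hc).congr fun N => ?_
  rw [intervalIntegral.integral_of_le hab, ← MeasureTheory.integral_indicator measurableSet_Ioc]
  congr 1
  funext v
  by_cases h : v ∈ Set.Ioc a b <;> simp [h]

lemma RL_interval (a b : ℝ) (g : ℝ → ℝ) (hg : IntegrableOn g (Set.uIoc a b)) (c : ℝ)
    (hc : 0 < c) :
    Tendsto (fun N : ℕ => ∫ u in a..b, g u * Real.sin (((N:ℝ)+1/2)*(c*u))) atTop (𝓝 0) := by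
  rcases le_total a b with h | h
  · exact RL_interval_le a b h g (by rwa [Set.uIoc_of_le h] at hg) c hc
  · have h2 := (RL_interval_le b a h g
      (by rwa [Set.uIoc_comm, Set.uIoc_of_le h] at hg) c hc).neg
    simp only [neg_zero] at h2
    refine h2.congr fun N => ?_
    rw [intervalIntegral.integral_symm a b, neg_neg]

theorem sinc_periodization (T : ℝ) (hT : 0 < T) (hT' : T < 2 * Real.pi) (t : ℝ) :
    Filter.Tendsto (fun N : ℕ => ∑ p ∈ Finset.Icc (-(N : ℤ)) (N : ℤ), sinc (t + p * T))
      Filter.atTop (nhds (Real.pi / T)) := by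
  have hT0 : T ≠ 0 := ne_of_gt hT
  have hπT : 0 < π / T := div_pos Real.pi_pos hT
  set g₁ : ℝ → ℝ := fun u => (Real.cos (t*u) - 1) / Real.sin (T*u/2) with hg₁def
  set g₂ : ℝ → ℝ := fun u => Real.cos (t*u) / Real.sin (T*u/2) with hg₂def
  -- positivity of sin on (0, π/T]
  have hsin : ∀ u : ℝ, 0 < u → u ≤ π/T → 0 < Real.sin (T*u/2) := by
    intro u hu0 hu1
    have hTu : T*u ≤ π := by
      have := (le_div_iff₀ hT).1 hu1
      linarith
    exact Real.sin_pos_of_pos_of_lt_pi (by positivity) (by linarith [Real.pi_pos])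
  -- nonvanishing of sin on uIcc (π/T) 1
  have hne : ∀ x ∈ Set.uIcc (π/T) 1, Real.sin (T*x/2) ≠ 0 := by
    intro x hx
    rw [Set.uIcc] at hx
    obtain ⟨hx1, hx2⟩ := hx
    have hx0 : 0 < x := lt_of_lt_of_le (lt_min hπT one_pos) hx1
    have hxlt : T * x < 2*π := by
      rcases le_total (π/T) 1 with hcase | hcase
      · have : x ≤ 1 := by
          have := hx2
          rwa [sup_of_le_right hcase] at this
        nlinarith
      · have hxle : x ≤ π/T := by
          have := hx2
          rwa [sup_of_le_left hcase] at this
        have : T * x ≤ π := by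
          have := (le_div_iff₀ hT).1 hxle
          linarith
        linarith [Real.pi_pos]
    exact ne_of_gt (Real.sin_pos_of_pos_of_lt_pi (by positivity) (by linarith))
  -- integrability of g₁
  have hg₁ : IntegrableOn g₁ (Set.uIoc 0 (π/T)) := by
    rw [Set.uIoc_of_le hπT.le]
    refine Measure.integrableOn_of_bounded (M := t^2*π^2/(2*T^2)) (measure_Ioc_lt_top).ne
      (Measurable.aestronglyMeasurable ?_) ?_
    · exact (((Real.continuous_cos.comp (continuous_const.mul continuous_id)).sub
        continuous_const).measurable).div
        ((Real.continuous_sin.comp ((continuous_const.mul continuous_id).div_const 2)).measurable)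
    · filter_upwards [ae_restrict_mem measurableSet_Ioc] with u hu
      obtain ⟨hu0, hu1⟩ := hu
      have hTu : T*u ≤ π := by
        have := (le_div_iff₀ hT).1 hu1
        linarith
      have hs1 : T*u/π ≤ Real.sin (T*u/2) := by
        have h := Real.mul_le_sin (x := T*u/2) (by positivity) (by linarith)
        have e : 2/π*(T*u/2) = T*u/π := by ring
        linarith [e ▸ h]
      have hspos : 0 < Real.sin (T*u/2) := lt_of_lt_of_le (by positivity) hs1
      have hc1 : Real.cos (t*u) ≤ 1 := Real.cos_le_one _
      have hc2 : 1 - (t*u)^2/2 ≤ Real.cos (t*u) := Real.one_sub_sq_div_two_le_cos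
      rw [hg₁def]
      simp only [Real.norm_eq_abs]
      rw [abs_div, abs_of_pos hspos, abs_of_nonpos (by linarith), div_le_iff₀ hspos]
      have hM : t^2*π^2/(2*T^2) * (T*u/π) ≤ t^2*π^2/(2*T^2) * Real.sin (T*u/2) :=
        mul_le_mul_of_nonneg_left hs1 (by positivity)
      have h6 : t^2*π^2/(2*T^2)*(T*u/π) = t^2*π*u/(2*T) := by
        field_simp
      have h5 : (t*u)^2/2 ≤ t^2*π*u/(2*T) := by
        have hmul := mul_le_mul_of_nonneg_left hu1 (by positivity : (0:ℝ) ≤ t^2*u/2)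
        calc (t*u)^2/2 = t^2*u/2 * u := by ring
          _ ≤ t^2*u/2 * (π/T) := hmul
          _ = t^2*π*u/(2*T) := by ring
      linarith
  -- integrability of g₂
  have hg₂ : IntegrableOn g₂ (Set.uIoc (π/T) 1) := by
    have hcont : ContinuousOn g₂ (Set.uIcc (π/T) 1) :=
      ContinuousOn.div
        ((Real.continuous_cos.comp (continuous_const.mul continuous_id)).continuousOn)
        ((Real.continuous_sin.comp ((continuous_const.mul continuous_id).div_const 2)).continuousOn)
        hne
    exact intervalIntegrable_iff.1 hcont.intervalIntegrable
  -- tendsto pieces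
  have hA : Tendsto (fun N : ℕ => ∫ u in (0:ℝ)..(π/T), (Real.cos (t*u) - 1) * EK T N u)
      atTop (𝓝 0) := by
    refine (RL_interval 0 (π/T) g₁ hg₁ T hT).congr fun N => ?_
    apply intervalIntegral.integral_congr
    intro u hu
    rw [Set.uIcc_of_le hπT.le] at hu
    obtain ⟨hu0, hu1⟩ := hu
    rcases eq_or_lt_of_le hu0 with rfl | hu0'
    · simp [hg₁def]
    · have hspos := hsin u hu0' hu1
      show g₁ u * Real.sin (((N:ℝ)+1/2)*(T*u)) = (Real.cos (t*u) - 1) * EK T N u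
      rw [← EK_mul_sin, hg₁def]
      rw [div_mul_eq_mul_div, ← mul_assoc, mul_div_assoc, div_self hspos.ne', mul_one]
  have hB : Tendsto (fun N : ℕ => ∫ u in (π/T)..1, Real.cos (t*u) * EK T N u)
      atTop (𝓝 0) := by
    refine (RL_interval (π/T) 1 g₂ hg₂ T hT).congr fun N => ?_
    apply intervalIntegral.integral_congr
    intro u hu
    have hs0 := hne u hu
    show g₂ u * Real.sin (((N:ℝ)+1/2)*(T*u)) = Real.cos (t*u) * EK T N u
    rw [← EK_mul_sin, hg₂def]
    rw [div_mul_eq_mul_div, ← mul_assoc, mul_div_assoc, div_self hs0, mul_one]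
  -- decomposition of the partial sums
  have key : ∀ N : ℕ, (∑ p ∈ Finset.Icc (-(N:ℤ)) (N:ℤ), sinc (t + (p:ℝ) * T))
      = π/T + ((∫ u in (0:ℝ)..(π/T), (Real.cos (t*u) - 1) * EK T N u)
          + ∫ u in (π/T)..1, Real.cos (t*u) * EK T N u) := by
    intro N
    have hcontEK : Continuous fun u => Real.cos (t*u) * EK T N u :=
      (Real.continuous_cos.comp (continuous_const.mul continuous_id)).mul (continuous_EK T N)
    have hcont1 : Continuous fun u => (Real.cos (t*u) - 1) * EK T N u :=
      ((Real.continuous_cos.comp (continuous_const.mul continuous_id)).sub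
        continuous_const).mul (continuous_EK T N)
    rw [partial_sum_eq]
    rw [← intervalIntegral.integral_add_adjacent_intervals
      (hcontEK.intervalIntegrable 0 (π/T)) (hcontEK.intervalIntegrable (π/T) 1)]
    have hsplit : ∫ u in (0:ℝ)..(π/T), Real.cos (t*u) * EK T N u
        = (∫ u in (0:ℝ)..(π/T), (Real.cos (t*u) - 1) * EK T N u)
            + ∫ u in (0:ℝ)..(π/T), EK T N u := by
      rw [← intervalIntegral.integral_add (hcont1.intervalIntegrable _ _)
        ((continuous_EK T N).intervalIntegrable _ _)]
      congr 1
      funext u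
      ring
    rw [hsplit, EK_integral T hT N]
    ring
  have hfinal := (hA.add hB).const_add (π/T)
  simp only [add_zero] at hfinal
  exact hfinal.congr fun N => (key N).symm
end
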